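/- For every finite abelian group G and every q ∈ G^n, the Gram matrix B_{n,q}ᵀ B_{n,q} has entries (B_{n,q}ᵀ B_{n,q})(i,i) = 6 n_{−2q_i} + 3 m_{q_i} on the diagonal and (B_{n,q}ᵀ B_{n,q})(i,j) = 6 n_{−q_i − q_j} for i ≠ j. -/

import Mathlib

open scoped Classical

noncomputable section

namespace CLPaper

open Matrix

/-- The matrix `B_n`: rows indexed by `[n]³`, columns by `[n]`;
the row of `(x₁,x₂,x₃)` is `e_{x₁} + e_{x₂} + e_{x₃}`. -/
def B (n : ℕ) : Matrix (Fin n × Fin n × Fin n) (Fin n) ℤ :=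
  fun x j => (if x.1 = j then 1 else 0) + (if x.2.1 = j then 1 else 0) +
    (if x.2.2 = j then 1 else 0)

/-- `det (B_n[K])` for an `n`-element subset `K` of `[n]³` (rows enumerated by a fixed
bijection; the quantities we consider do not depend on this choice), `0` otherwise. -/
def subdet (n : ℕ) (K : Finset (Fin n × Fin n × Fin n)) : ℤ :=
  if h : K.card = n then
    ((B n).submatrix
      (fun i : Fin n => ((K.equivFin.symm (Fin.cast h.symm i)) : Fin n × Fin n × Fin n))
      id).det
  else 0

/-- The cokernel `ℤ^n / (row span of the rows of `B_n` indexed by `K`)`. -/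
def cokK (n : ℕ) (K : Finset (Fin n × Fin n × Fin n)) : Type :=
  (Fin n → ℤ) ⧸ Submodule.span ℤ ((fun x => B n x) '' (K : Set (Fin n × Fin n × Fin n)))

instance (n : ℕ) (K : Finset (Fin n × Fin n × Fin n)) : AddCommGroup (cokK n K) :=
  inferInstanceAs (AddCommGroup ((Fin n → ℤ) ⧸ Submodule.span ℤ _))

/-- The `p`-Sylow subgroup of an abelian group: the subgroup of elements annihilated
by a power of `p`. -/
def sylow (p : ℕ) (A : Type*) [AddCommGroup A] : AddSubgroup A where
  carrier := {x | ∃ k : ℕ, p ^ k • x = 0}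
  zero_mem' := ⟨0, by simp⟩
  add_mem' := by
    rintro x y ⟨k, hk⟩ ⟨l, hl⟩
    refine ⟨k + l, ?_⟩
    rw [smul_add, pow_add, mul_comm, mul_smul, hk, smul_zero, mul_comm, mul_smul, hl,
      smul_zero, add_zero]
  neg_mem' := by
    rintro x ⟨k, hk⟩
    exact ⟨k, by rw [smul_neg, hk, neg_zero]⟩

/-- Number of surjective homomorphisms from `A` to `G`. -/
def numSur (A G : Type*) [AddCommGroup A] [AddCommGroup G] : ℕ :=
  Nat.card {f : A →+ G // Function.Surjective f}

variable {G : Type*} [AddCommGroup G] [Fintype G]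

/-- The submatrix `B_{n,q}` of `B_n` consisting of the rows indexed by
`I_q = {(x₁,x₂,x₃) : q_{x₁} + q_{x₂} + q_{x₃} = 0}`. -/
def Bq (n : ℕ) (q : Fin n → G) :
    Matrix {x : Fin n × Fin n × Fin n // q x.1 + q x.2.1 + q x.2.2 = 0} (Fin n) ℤ :=
  fun x j => B n x.1 j

/-- The Gram matrix `B_{n,q}ᵀ B_{n,q}`. -/
def gram (n : ℕ) (q : Fin n → G) : Matrix (Fin n) (Fin n) ℤ :=
  (Bq n q)ᵀ * Bq n q

/-- `n_a(q) = #{i : q_i = a}`. -/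
def cnt {n : ℕ} (q : Fin n → G) (a : G) : ℕ :=
  (Finset.univ.filter (fun i => q i = a)).card

/-- `m_a = ∑_b n_b n_{-a-b}` associated to a counts vector `n̄ : G → ℕ`. -/
def mOf (nbar : G → ℕ) (a : G) : ℕ :=
  ∑ b : G, nbar b * nbar (-a - b)

/-- The matrix `M` indexed by `G₊ = {a : n_a > 0}`, with
`M(a,a) = 2 n_a n_{-2a} + m_a` and `M(a,b) = 2 √(n_a n_b) n_{-a-b}` for `a ≠ b`. -/
def Mmat (nbar : G → ℕ) :
    Matrix {a : G // 0 < nbar a} {a : G // 0 < nbar a} ℝ :=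
  fun a b =>
    if (a : G) = (b : G) then
      2 * (nbar (a : G) : ℝ) * (nbar (-(2 • (a : G))) : ℝ) + (mOf nbar (a : G) : ℝ)
    else
      2 * Real.sqrt ((nbar (a : G) : ℝ) * (nbar (b : G) : ℝ)) * (nbar (-(a : G) - b) : ℝ)

/-- The set `S(n̄)` of vectors `q ∈ G^n` with the prescribed counts. -/
def Sset (n : ℕ) (nbar : G → ℕ) : Finset (Fin n → G) :=
  Finset.univ.filter (fun q => ∀ a : G, cnt q a = nbar a)

/-- `E(n̄) = ∑_{q ∈ S(n̄)} det(B_{n,q}ᵀ B_{n,q}) / (3^{n+1} n^{2n})`. -/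
def Eval (n : ℕ) (nbar : G → ℕ) : ℝ :=
  (∑ q ∈ Sset n nbar, ((gram n q).det : ℝ)) / ((3 : ℝ) ^ (n + 1) * (n : ℝ) ^ (2 * n))

/-- Kullback–Leibler divergence of two probability vectors on `G` (natural log;
terms with `ν a = 0` contribute `0`). -/
def klDiv (ν μ : G → ℝ) : ℝ :=
  ∑ a : G, if ν a = 0 then 0 else ν a * Real.log (ν a / μ a)

/-- `ν_{n̄}(a) = n_a / n`. -/
def nuOf (n : ℕ) (nbar : G → ℕ) : G → ℝ := fun a => (nbar a : ℝ) / n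

/-- `μ_{n̄}(a) = m_a / n²`. -/
def muOf (n : ℕ) (nbar : G → ℕ) : G → ℝ := fun a => (mOf nbar a : ℝ) / (n : ℝ) ^ 2

/-- `t_n = 2C √(|G| n log n)`. -/
def tSeq (G : Type*) [Fintype G] (C : ℝ) (n : ℕ) : ℝ :=
  2 * C * Real.sqrt ((Fintype.card G) * n * Real.log n)

/-- `r_n = 4C |G| log n`. -/
def rSeq (G : Type*) [Fintype G] (C : ℝ) (n : ℕ) : ℝ :=
  4 * C * (Fintype.card G) * Real.log n

/-- `n̄ ∈ D_n`: the counts sum to `n` and the support generates `G`. -/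
def memD (n : ℕ) (nbar : G → ℕ) : Prop :=
  (∑ a : G, nbar a = n) ∧ AddSubgroup.closure {a : G | 0 < nbar a} = ⊤

/-- `n̄ ∈ D_n'`: moreover `m_a > 0` for all `a ∈ G₊`. -/
def memD' (n : ℕ) (nbar : G → ℕ) : Prop :=
  memD n nbar ∧ ∀ a : G, 0 < nbar a → 0 < mOf nbar a

/-- `u_H(g) = 1/|H|` for `g ∈ H` and `0` otherwise. -/
def uH (H : AddSubgroup G) : G → ℝ :=
  fun g => if g ∈ H then (Nat.card H : ℝ)⁻¹ else 0

/-- `n̄ ∈ B(n,H)`. -/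
def memB (C : ℝ) (n : ℕ) (H : AddSubgroup G) (nbar : G → ℕ) : Prop :=
  memD' n nbar ∧ (∀ a : G, |(nbar a : ℝ) - n * uH H a| ≤ tSeq G C n) ∧
    (∑ a ∈ Finset.univ.filter (fun a : G => a ∉ H), (nbar a : ℝ)) ≤ rSeq G C n

end CLPaper

open CLPaper

section Helpers

open Finset Matrix

variable {G : Type*} [AddCommGroup G] [Fintype G] {n : ℕ}

omit [AddCommGroup G] [Fintype G] in
private lemma cnt_cast (q : Fin n → G) (a : G) :
    (cnt q a : ℤ) = ∑ k : Fin n, if q k = a then 1 else 0 := by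
  rw [cnt, Finset.card_filter]; push_cast; simp

private lemma collapse (u : Fin n) (g : Fin n → ℤ) :
    ∑ x : Fin n, (if x = u then (1:ℤ) else 0) * g x = g u := by
  simp [boole_mul]

omit [AddCommGroup G] in
private lemma fiber (q : Fin n → G) (f : G → ℤ) :
    ∑ k : Fin n, f (q k) = ∑ b : G, (cnt q b : ℤ) * f b := by
  have := Finset.sum_fiberwise (univ : Finset (Fin n)) q (fun k => f (q k))
  rw [← this]
  refine Finset.sum_congr rfl fun b _ => ?_
  rw [Finset.sum_congr rfl (fun x hx => by
    simp only [mem_filter] at hx; show f (q x) = f b; rw [hx.2])]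
  simp [cnt, mul_comm]

omit [Fintype G] in
private lemma iff3 (a b c : G) : c = -a - b ↔ a + b + c = 0 := by
  constructor
  · intro h; rw [h]; abel
  · intro h; have : c = -(a+b) := by rwa [add_comm, add_eq_zero_iff_eq_neg] at h
    rw [this]; abel

omit [Fintype G] in
private lemma iff3mid (a b c : G) : b = -a - c ↔ a + b + c = 0 := by
  constructor
  · intro h; rw [h]; abel
  · intro h; have : b = -(a+c) := by
      have h' : b + (a + c) = 0 := by rw [← h]; abel
      rwa [add_eq_zero_iff_eq_neg] at h'
    rw [this]; abel

omit [Fintype G] in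
private lemma iff3fst (a b c : G) : a = -b - c ↔ a + b + c = 0 := by
  constructor
  · intro h; rw [h]; abel
  · intro h; have : a = -(b+c) := by
      have h' : a + (b + c) = 0 := by rw [← h]; abel
      rwa [add_eq_zero_iff_eq_neg] at h'
    rw [this]; abel

private lemma pin12 (q : Fin n → G) (u v : Fin n) :
    ∑ x : Fin n × Fin n × Fin n,
      (if q x.1 + q x.2.1 + q x.2.2 = 0 then (1:ℤ) else 0) *
        ((if x.1 = u then 1 else 0) * (if x.2.1 = v then 1 else 0)) =
    (cnt q (-(q u) - q v) : ℤ) := by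
  rw [Fintype.sum_prod_type]
  simp only [Fintype.sum_prod_type]
  have h3 : ∀ x1 x2 : Fin n,
      (∑ x3 : Fin n, (if q x1 + q x2 + q x3 = 0 then (1:ℤ) else 0) *
        ((if x1 = u then 1 else 0) * (if x2 = v then 1 else 0)))
      = (cnt q (-(q x1) - q x2) : ℤ) * ((if x1 = u then 1 else 0) * (if x2 = v then 1 else 0)) := by
    intro x1 x2
    rw [← Finset.sum_mul]; congr 1
    rw [cnt_cast]
    exact Finset.sum_congr rfl fun x3 _ => if_congr ((iff3 _ _ _).symm) rfl rfl
  simp only [h3]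
  calc ∑ x1 : Fin n, ∑ x2 : Fin n, (cnt q (-(q x1) - q x2) : ℤ) *
        ((if x1 = u then 1 else 0) * (if x2 = v then 1 else 0))
      = ∑ x1 : Fin n, (if x1 = u then (1:ℤ) else 0) *
          ∑ x2 : Fin n, (if x2 = v then (1:ℤ) else 0) * (cnt q (-(q x1) - q x2) : ℤ) := by
        refine Finset.sum_congr rfl fun x1 _ => ?_
        rw [Finset.mul_sum]
        exact Finset.sum_congr rfl fun x2 _ => by ring
    _ = (cnt q (-(q u) - q v) : ℤ) := by
        simp only [collapse]

private lemma pin13 (q : Fin n → G) (u v : Fin n) :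
    ∑ x : Fin n × Fin n × Fin n,
      (if q x.1 + q x.2.1 + q x.2.2 = 0 then (1:ℤ) else 0) *
        ((if x.1 = u then 1 else 0) * (if x.2.2 = v then 1 else 0)) =
    (cnt q (-(q u) - q v) : ℤ) := by
  rw [Fintype.sum_prod_type]
  simp only [Fintype.sum_prod_type]
  have h3 : ∀ x1 x2 : Fin n,
      (∑ x3 : Fin n, (if q x1 + q x2 + q x3 = 0 then (1:ℤ) else 0) *
        ((if x1 = u then 1 else 0) * (if x3 = v then 1 else 0)))
      = (if q x1 + q x2 + q v = 0 then (1:ℤ) else 0) * (if x1 = u then 1 else 0) := by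
    intro x1 x2
    calc (∑ x3 : Fin n, (if q x1 + q x2 + q x3 = 0 then (1:ℤ) else 0) *
          ((if x1 = u then 1 else 0) * (if x3 = v then 1 else 0)))
        = ∑ x3 : Fin n, (if x3 = v then (1:ℤ) else 0) *
            ((if q x1 + q x2 + q x3 = 0 then (1:ℤ) else 0) * (if x1 = u then 1 else 0)) := by
          exact Finset.sum_congr rfl fun x3 _ => by ring
      _ = (if q x1 + q x2 + q v = 0 then (1:ℤ) else 0) * (if x1 = u then 1 else 0) :=
          collapse v _
  simp only [h3]
  have h2 : ∀ x1 : Fin n,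
      (∑ x2 : Fin n, (if q x1 + q x2 + q v = 0 then (1:ℤ) else 0) * (if x1 = u then 1 else 0))
      = (cnt q (-(q x1) - q v) : ℤ) * (if x1 = u then 1 else 0) := by
    intro x1
    rw [← Finset.sum_mul]; congr 1
    rw [cnt_cast]
    exact Finset.sum_congr rfl fun x2 _ => if_congr ((iff3mid _ _ _).symm) rfl rfl
  simp only [h2]
  calc ∑ x1 : Fin n, (cnt q (-(q x1) - q v) : ℤ) * (if x1 = u then 1 else 0)
      = ∑ x1 : Fin n, (if x1 = u then (1:ℤ) else 0) * (cnt q (-(q x1) - q v) : ℤ) :=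
        Finset.sum_congr rfl fun x1 _ => by ring
    _ = (cnt q (-(q u) - q v) : ℤ) := collapse u _

private lemma pin23 (q : Fin n → G) (u v : Fin n) :
    ∑ x : Fin n × Fin n × Fin n,
      (if q x.1 + q x.2.1 + q x.2.2 = 0 then (1:ℤ) else 0) *
        ((if x.2.1 = u then 1 else 0) * (if x.2.2 = v then 1 else 0)) =
    (cnt q (-(q u) - q v) : ℤ) := by
  rw [Fintype.sum_prod_type]
  simp only [Fintype.sum_prod_type]
  have h3 : ∀ x1 x2 : Fin n,
      (∑ x3 : Fin n, (if q x1 + q x2 + q x3 = 0 then (1:ℤ) else 0) *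
        ((if x2 = u then 1 else 0) * (if x3 = v then 1 else 0)))
      = (if q x1 + q x2 + q v = 0 then (1:ℤ) else 0) * (if x2 = u then 1 else 0) := by
    intro x1 x2
    calc (∑ x3 : Fin n, (if q x1 + q x2 + q x3 = 0 then (1:ℤ) else 0) *
          ((if x2 = u then 1 else 0) * (if x3 = v then 1 else 0)))
        = ∑ x3 : Fin n, (if x3 = v then (1:ℤ) else 0) *
            ((if q x1 + q x2 + q x3 = 0 then (1:ℤ) else 0) * (if x2 = u then 1 else 0)) := by
          exact Finset.sum_congr rfl fun x3 _ => by ring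
      _ = _ := collapse v _
  simp only [h3]
  have h2 : ∀ x1 : Fin n,
      (∑ x2 : Fin n, (if q x1 + q x2 + q v = 0 then (1:ℤ) else 0) * (if x2 = u then 1 else 0))
      = (if q x1 + q u + q v = 0 then (1:ℤ) else 0) := by
    intro x1
    calc (∑ x2 : Fin n, (if q x1 + q x2 + q v = 0 then (1:ℤ) else 0) * (if x2 = u then 1 else 0))
        = ∑ x2 : Fin n, (if x2 = u then (1:ℤ) else 0) *
            (if q x1 + q x2 + q v = 0 then (1:ℤ) else 0) :=
          Finset.sum_congr rfl fun x2 _ => by ring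
      _ = _ := collapse u _
  simp only [h2]
  rw [cnt_cast]
  exact Finset.sum_congr rfl fun x1 _ => if_congr (iff3fst _ _ _).symm rfl rfl

private lemma mo1 (q : Fin n → G) (u : Fin n) :
    ∑ x : Fin n × Fin n × Fin n,
      (if q x.1 + q x.2.1 + q x.2.2 = 0 then (1:ℤ) else 0) * (if x.1 = u then 1 else 0) =
    (mOf (cnt q) (q u) : ℤ) := by
  rw [Fintype.sum_prod_type]
  simp only [Fintype.sum_prod_type]
  have h3 : ∀ x1 x2 : Fin n,
      (∑ x3 : Fin n, (if q x1 + q x2 + q x3 = 0 then (1:ℤ) else 0) * (if x1 = u then 1 else 0))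
      = (cnt q (-(q x1) - q x2) : ℤ) * (if x1 = u then 1 else 0) := by
    intro x1 x2
    rw [← Finset.sum_mul]; congr 1
    rw [cnt_cast]
    exact Finset.sum_congr rfl fun x3 _ => if_congr ((iff3 _ _ _).symm) rfl rfl
  simp only [h3]
  rw [Finset.sum_comm]
  have h1 : ∀ x2 : Fin n,
      (∑ x1 : Fin n, (cnt q (-(q x1) - q x2) : ℤ) * (if x1 = u then 1 else 0))
      = (cnt q (-(q u) - q x2) : ℤ) := by
    intro x2
    calc (∑ x1 : Fin n, (cnt q (-(q x1) - q x2) : ℤ) * (if x1 = u then 1 else 0))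
        = ∑ x1 : Fin n, (if x1 = u then (1:ℤ) else 0) * (cnt q (-(q x1) - q x2) : ℤ) :=
          Finset.sum_congr rfl fun x1 _ => by ring
      _ = _ := collapse u _
  simp only [h1]
  rw [fiber q (fun b => (cnt q (-(q u) - b) : ℤ))]
  rw [mOf]; push_cast; rfl

private lemma mo2 (q : Fin n → G) (u : Fin n) :
    ∑ x : Fin n × Fin n × Fin n,
      (if q x.1 + q x.2.1 + q x.2.2 = 0 then (1:ℤ) else 0) * (if x.2.1 = u then 1 else 0) =
    (mOf (cnt q) (q u) : ℤ) := by
  rw [Fintype.sum_prod_type]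
  simp only [Fintype.sum_prod_type]
  have h3 : ∀ x1 x2 : Fin n,
      (∑ x3 : Fin n, (if q x1 + q x2 + q x3 = 0 then (1:ℤ) else 0) * (if x2 = u then 1 else 0))
      = (cnt q (-(q x1) - q x2) : ℤ) * (if x2 = u then 1 else 0) := by
    intro x1 x2
    rw [← Finset.sum_mul]; congr 1
    rw [cnt_cast]
    exact Finset.sum_congr rfl fun x3 _ => if_congr ((iff3 _ _ _).symm) rfl rfl
  simp only [h3]
  have h1 : ∀ x1 : Fin n,
      (∑ x2 : Fin n, (cnt q (-(q x1) - q x2) : ℤ) * (if x2 = u then 1 else 0))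
      = (cnt q (-(q u) - q x1) : ℤ) := by
    intro x1
    calc (∑ x2 : Fin n, (cnt q (-(q x1) - q x2) : ℤ) * (if x2 = u then 1 else 0))
        = ∑ x2 : Fin n, (if x2 = u then (1:ℤ) else 0) * (cnt q (-(q x1) - q x2) : ℤ) :=
          Finset.sum_congr rfl fun x2 _ => by ring
      _ = (cnt q (-(q x1) - q u) : ℤ) := collapse u _
      _ = _ := by rw [show -(q x1) - q u = -(q u) - q x1 by abel]
  simp only [h1]
  rw [fiber q (fun b => (cnt q (-(q u) - b) : ℤ))]
  rw [mOf]; push_cast; rfl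

private lemma mo3 (q : Fin n → G) (u : Fin n) :
    ∑ x : Fin n × Fin n × Fin n,
      (if q x.1 + q x.2.1 + q x.2.2 = 0 then (1:ℤ) else 0) * (if x.2.2 = u then 1 else 0) =
    (mOf (cnt q) (q u) : ℤ) := by
  rw [Fintype.sum_prod_type]
  simp only [Fintype.sum_prod_type]
  have h3 : ∀ x1 x2 : Fin n,
      (∑ x3 : Fin n, (if q x1 + q x2 + q x3 = 0 then (1:ℤ) else 0) * (if x3 = u then 1 else 0))
      = (if q x1 + q x2 + q u = 0 then (1:ℤ) else 0) := by
    intro x1 x2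
    calc (∑ x3 : Fin n, (if q x1 + q x2 + q x3 = 0 then (1:ℤ) else 0) * (if x3 = u then 1 else 0))
        = ∑ x3 : Fin n, (if x3 = u then (1:ℤ) else 0) *
            (if q x1 + q x2 + q x3 = 0 then (1:ℤ) else 0) :=
          Finset.sum_congr rfl fun x3 _ => by ring
      _ = _ := collapse u _
  simp only [h3]
  have h2 : ∀ x1 : Fin n,
      (∑ x2 : Fin n, if q x1 + q x2 + q u = 0 then (1:ℤ) else 0)
      = (cnt q (-(q u) - q x1) : ℤ) := by
    intro x1
    rw [cnt_cast]
    refine Finset.sum_congr rfl fun x2 _ => if_congr ?_ rfl rfl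
    rw [show -(q u) - q x1 = -(q x1) - q u by abel]
    exact ((iff3mid _ _ _)).symm
  simp only [h2]
  rw [fiber q (fun b => (cnt q (-(q u) - b) : ℤ))]
  rw [mOf]; push_cast; rfl

private lemma gram_eq_sum (q : Fin n → G) (i j : Fin n) :
    gram n q i j = ∑ x : Fin n × Fin n × Fin n,
      (if q x.1 + q x.2.1 + q x.2.2 = 0 then (1:ℤ) else 0) * (B n x i * B n x j) := by
  rw [CLPaper.gram, Matrix.mul_apply]
  calc (∑ x : {x : Fin n × Fin n × Fin n // q x.1 + q x.2.1 + q x.2.2 = 0},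
          (Bq n q)ᵀ i x * Bq n q x j)
      = ∑ x : {x : Fin n × Fin n × Fin n // q x.1 + q x.2.1 + q x.2.2 = 0},
          B n x.1 i * B n x.1 j := rfl
    _ = ∑ x ∈ Finset.univ.filter
          (fun x : Fin n × Fin n × Fin n => q x.1 + q x.2.1 + q x.2.2 = 0),
          B n x i * B n x j :=
        (Finset.sum_subtype _ (by simp) (fun x => B n x i * B n x j)).symm
    _ = ∑ x : Fin n × Fin n × Fin n,
          if q x.1 + q x.2.1 + q x.2.2 = 0 then B n x i * B n x j else 0 :=
        Finset.sum_filter _ _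
    _ = _ := Finset.sum_congr rfl fun x _ => (boole_mul _ _).symm

end Helpers

/-- The entries of the Gram matrix `B_{n,q}ᵀ B_{n,q}`:
`6 n_{-2q_i} + 3 m_{q_i}` on the diagonal, and `6 n_{-q_i-q_j}` off the diagonal. -/
theorem gram_entries (G : Type*) [AddCommGroup G] [Fintype G]
    (n : ℕ) (q : Fin n → G) (i j : Fin n) :
    (i = j → gram n q i i = 6 * (cnt q (-(2 • q i)) : ℤ) + 3 * (mOf (cnt q) (q i) : ℤ)) ∧
    (i ≠ j → gram n q i j = 6 * (cnt q (-(q i) - q j) : ℤ)) := by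
  constructor
  · intro _
    rw [gram_eq_sum q i i]
    have hsq : ∀ y : Fin n, (if y = i then (1:ℤ) else 0) * (if y = i then 1 else 0)
        = (if y = i then 1 else 0) := by intro y; split_ifs <;> ring
    have expand : ∀ x : Fin n × Fin n × Fin n,
        (if q x.1 + q x.2.1 + q x.2.2 = 0 then (1:ℤ) else 0) * (B n x i * B n x i)
        = (if q x.1 + q x.2.1 + q x.2.2 = 0 then (1:ℤ) else 0) * (if x.1 = i then 1 else 0)
          + (if q x.1 + q x.2.1 + q x.2.2 = 0 then (1:ℤ) else 0) * (if x.2.1 = i then 1 else 0)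
          + (if q x.1 + q x.2.1 + q x.2.2 = 0 then (1:ℤ) else 0) * (if x.2.2 = i then 1 else 0)
          + 2 * ((if q x.1 + q x.2.1 + q x.2.2 = 0 then (1:ℤ) else 0) *
              ((if x.1 = i then 1 else 0) * (if x.2.1 = i then 1 else 0)))
          + 2 * ((if q x.1 + q x.2.1 + q x.2.2 = 0 then (1:ℤ) else 0) *
              ((if x.1 = i then 1 else 0) * (if x.2.2 = i then 1 else 0)))
          + 2 * ((if q x.1 + q x.2.1 + q x.2.2 = 0 then (1:ℤ) else 0) *
              ((if x.2.1 = i then 1 else 0) * (if x.2.2 = i then 1 else 0))) := by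
      intro x
      simp only [B]
      rw [show ((if x.1 = i then (1:ℤ) else 0) + (if x.2.1 = i then 1 else 0)
            + (if x.2.2 = i then 1 else 0)) *
          ((if x.1 = i then (1:ℤ) else 0) + (if x.2.1 = i then 1 else 0)
            + (if x.2.2 = i then 1 else 0))
          = (if x.1 = i then (1:ℤ) else 0) * (if x.1 = i then 1 else 0)
            + (if x.2.1 = i then (1:ℤ) else 0) * (if x.2.1 = i then 1 else 0)
            + (if x.2.2 = i then (1:ℤ) else 0) * (if x.2.2 = i then 1 else 0)
            + 2 * ((if x.1 = i then (1:ℤ) else 0) * (if x.2.1 = i then 1 else 0))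
            + 2 * ((if x.1 = i then (1:ℤ) else 0) * (if x.2.2 = i then 1 else 0))
            + 2 * ((if x.2.1 = i then (1:ℤ) else 0) * (if x.2.2 = i then 1 else 0)) by ring,
        hsq x.1, hsq x.2.1, hsq x.2.2]
      ring
    simp only [expand]
    simp only [Finset.sum_add_distrib, ← Finset.mul_sum]
    rw [mo1 q i, mo2 q i, mo3 q i, pin12 q i i, pin13 q i i, pin23 q i i,
      show -(q i) - q i = -(2 • q i) by rw [two_smul]; abel]
    ring
  · intro hij
    rw [gram_eq_sum q i j]
    have hz : ∀ y : Fin n, (if y = i then (1:ℤ) else 0) * (if y = j then 1 else 0) = 0 := by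
      intro y; split_ifs with h1 h2
      · exact absurd (h1 ▸ h2) hij
      all_goals ring
    have expand : ∀ x : Fin n × Fin n × Fin n,
        (if q x.1 + q x.2.1 + q x.2.2 = 0 then (1:ℤ) else 0) * (B n x i * B n x j)
        = (if q x.1 + q x.2.1 + q x.2.2 = 0 then (1:ℤ) else 0) *
            ((if x.1 = i then 1 else 0) * (if x.2.1 = j then 1 else 0))
          + (if q x.1 + q x.2.1 + q x.2.2 = 0 then (1:ℤ) else 0) *
            ((if x.1 = i then 1 else 0) * (if x.2.2 = j then 1 else 0))
          + (if q x.1 + q x.2.1 + q x.2.2 = 0 then (1:ℤ) else 0) *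
            ((if x.1 = j then 1 else 0) * (if x.2.1 = i then 1 else 0))
          + (if q x.1 + q x.2.1 + q x.2.2 = 0 then (1:ℤ) else 0) *
            ((if x.2.1 = i then 1 else 0) * (if x.2.2 = j then 1 else 0))
          + (if q x.1 + q x.2.1 + q x.2.2 = 0 then (1:ℤ) else 0) *
            ((if x.1 = j then 1 else 0) * (if x.2.2 = i then 1 else 0))
          + (if q x.1 + q x.2.1 + q x.2.2 = 0 then (1:ℤ) else 0) *
            ((if x.2.1 = j then 1 else 0) * (if x.2.2 = i then 1 else 0)) := by
      intro x
      simp only [B]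
      rw [show ((if x.1 = i then (1:ℤ) else 0) + (if x.2.1 = i then 1 else 0)
            + (if x.2.2 = i then 1 else 0)) *
          ((if x.1 = j then (1:ℤ) else 0) + (if x.2.1 = j then 1 else 0)
            + (if x.2.2 = j then 1 else 0))
          = (if x.1 = i then (1:ℤ) else 0) * (if x.1 = j then 1 else 0)
            + (if x.2.1 = i then (1:ℤ) else 0) * (if x.2.1 = j then 1 else 0)
            + (if x.2.2 = i then (1:ℤ) else 0) * (if x.2.2 = j then 1 else 0)
            + ((if x.1 = i then (1:ℤ) else 0) * (if x.2.1 = j then 1 else 0)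
            + (if x.1 = i then (1:ℤ) else 0) * (if x.2.2 = j then 1 else 0)
            + (if x.1 = j then (1:ℤ) else 0) * (if x.2.1 = i then 1 else 0)
            + (if x.2.1 = i then (1:ℤ) else 0) * (if x.2.2 = j then 1 else 0)
            + (if x.1 = j then (1:ℤ) else 0) * (if x.2.2 = i then 1 else 0)
            + (if x.2.1 = j then (1:ℤ) else 0) * (if x.2.2 = i then 1 else 0)) by ring,
        hz x.1, hz x.2.1, hz x.2.2]
      ring
    simp only [expand]
    simp only [Finset.sum_add_distrib]
    rw [pin12 q i j, pin13 q i j, pin12 q j i, pin23 q i j, pin13 q j i, pin23 q j i,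
      show -(q j) - q i = -(q i) - q j by abel]
    ring
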